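/- Let (L, ν, τ) be a Šerstnev random normed space with sup-continuous triangle function τ satisfying τ(F,G)(x) ≥ sup_{t∈[0,1]} min{F(tx), G((1−t)x)} for all x ≥ 0 and F, G ∈ D⁺ (which implies condition (W)). Then the family P_{fc}(L) of all nonempty closed convex subsets of L is closed in P_f(L) with respect to the probabilistic Pompeiu–Hausdorff metric H; consequently, if L is complete then P_{fc}(L) is complete with respect to H, and the family P_{kc}(L) of all nonempty compact convex subsets of L is complete with respect to H. -/

import Mathlib

/-- The modified Lévy distance between two functions `F G : ℝ → ℝ`:
the infimum of all `h > 0` such that for every `x ∈ (-1/h, 1/h)` the inequalities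
`F (x - h) - h ≤ G x ≤ F (x + h) + h` and `G (x - h) - h ≤ F x ≤ G (x + h) + h` hold. -/
noncomputable def dL (F G : ℝ → ℝ) : ℝ :=
  sInf {h : ℝ | 0 < h ∧ ∀ x ∈ Set.Ioo (-h⁻¹) h⁻¹,
    (F (x - h) - h ≤ G x ∧ G x ≤ F (x + h) + h) ∧
    (G (x - h) - h ≤ F x ∧ F x ≤ G (x + h) + h)}

/-- A distance distribution function: a nondecreasing, left-continuous function
`F : ℝ → [0,1]` with `F x = 0` for all `x ≤ 0`.  `Δ⁺` is the set of all such functions. -/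
def IsDDF (F : ℝ → ℝ) : Prop :=
  Monotone F ∧ (∀ x : ℝ, ContinuousWithinAt F (Set.Iio x) x) ∧
    (∀ x : ℝ, F x ≤ 1) ∧ (∀ x : ℝ, x ≤ 0 → F x = 0)

/-- The distance distribution function `ε₀`. -/
noncomputable def eps0 : ℝ → ℝ := fun x => if x ≤ 0 then 0 else 1

/-- A triangle function `τ` on `Δ⁺`: commutative, associative, nondecreasing in each
argument, continuous (sequentially, with respect to the modified Lévy metric `dL`,
which metrizes the topology of weak convergence), with identity `ε₀`. -/
structure IsTriangleFn (τ : (ℝ → ℝ) → (ℝ → ℝ) → (ℝ → ℝ)) : Prop where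
  isDDF : ∀ F G, IsDDF F → IsDDF G → IsDDF (τ F G)
  comm : ∀ F G, IsDDF F → IsDDF G → τ F G = τ G F
  assoc : ∀ F G K, IsDDF F → IsDDF G → IsDDF K → τ (τ F G) K = τ F (τ G K)
  mono : ∀ F₁ F₂ G₁ G₂, IsDDF F₁ → IsDDF F₂ → IsDDF G₁ → IsDDF G₂ →
    F₁ ≤ F₂ → G₁ ≤ G₂ → τ F₁ G₁ ≤ τ F₂ G₂
  ident : ∀ F, IsDDF F → τ F eps0 = F
  continuous : ∀ (Fn Gn : ℕ → ℝ → ℝ) (F G : ℝ → ℝ),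
    (∀ n, IsDDF (Fn n)) → (∀ n, IsDDF (Gn n)) → IsDDF F → IsDDF G →
    Filter.Tendsto (fun n => dL (Fn n) F) Filter.atTop (nhds 0) →
    Filter.Tendsto (fun n => dL (Gn n) G) Filter.atTop (nhds 0) →
    Filter.Tendsto (fun n => dL (τ (Fn n) (Gn n)) (τ F G)) Filter.atTop (nhds 0)

/-- A probabilistic metric space `(L, ρ, τ)`. -/
structure IsPMSpace {L : Type*} (ρ : L → L → ℝ → ℝ)
    (τ : (ℝ → ℝ) → (ℝ → ℝ) → (ℝ → ℝ)) : Prop where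
  isDDF : ∀ p q, IsDDF (ρ p q)
  triangleFn : IsTriangleFn τ
  refl : ∀ p, ρ p p = eps0
  eq_of : ∀ p q, ρ p q = eps0 → p = q
  symm : ∀ p q, ρ p q = ρ q p
  tri_ineq : ∀ p q r, τ (ρ p q) (ρ q r) ≤ ρ p r

/-- `τ` is sup-continuous: `τ (sup_i F_i) G = sup_i τ (F_i) G` pointwise, for every
(nonempty) family `{F_i} ⊆ Δ⁺` and every `G ∈ Δ⁺`. -/
def SupContinuous (τ : (ℝ → ℝ) → (ℝ → ℝ) → (ℝ → ℝ)) : Prop :=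
  ∀ (ι : Type) [Nonempty ι] (Fi : ι → ℝ → ℝ) (G : ℝ → ℝ),
    (∀ i, IsDDF (Fi i)) → IsDDF G →
    ∀ x : ℝ, τ (fun y => ⨆ i, Fi i y) G x = ⨆ i, τ (Fi i) G x

/-- Condition (W): for all `F, G ∈ Δ⁺`, `x > 0` and real `α, β`,
`F x > α` and `G x > β` imply `τ F G x > max (α + β - 1) 0`. -/
def CondW (τ : (ℝ → ℝ) → (ℝ → ℝ) → (ℝ → ℝ)) : Prop :=
  ∀ F G, IsDDF F → IsDDF G → ∀ x : ℝ, 0 < x → ∀ α β : ℝ,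
    α < F x → β < G x → max (α + β - 1) 0 < τ F G x

/-- Convergence of a sequence in the strong topology of the PM space:
for every `t > 0`, eventually `F_{p_n p}(t) > 1 - t`. -/
def SConvSeq {L : Type*} (ρ : L → L → ℝ → ℝ) (pn : ℕ → L) (p : L) : Prop :=
  ∀ t : ℝ, 0 < t → ∃ n₀ : ℕ, ∀ n ≥ n₀, 1 - t < ρ (pn n) p t

/-- Cauchy sequence in a PM space. -/
def SCauchySeq {L : Type*} (ρ : L → L → ℝ → ℝ) (pn : ℕ → L) : Prop :=
  ∀ t : ℝ, 0 < t → ∃ n₀ : ℕ, ∀ m ≥ n₀, ∀ n ≥ n₀, 1 - t < ρ (pn m) (pn n) t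

/-- Completeness of a PM space: every Cauchy sequence converges in the strong topology. -/
def SComplete {L : Type*} (ρ : L → L → ℝ → ℝ) : Prop :=
  ∀ pn : ℕ → L, SCauchySeq ρ pn → ∃ p : L, SConvSeq ρ pn p

/-- The closure of a set in the strong topology of a PM space (the strong topology is
metrizable, so the closure coincides with the sequential closure). -/
def SClosure {L : Type*} (ρ : L → L → ℝ → ℝ) (A : Set L) : Set L :=
  {q | ∃ pn : ℕ → L, (∀ n, pn n ∈ A) ∧ SConvSeq ρ pn q}

/-- A set closed in the strong topology of a PM space. -/
def SClosed {L : Type*} (ρ : L → L → ℝ → ℝ) (A : Set L) : Prop :=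
  SClosure ρ A ⊆ A

/-- The probabilistic distance from a point to a set: `F_{pB}(x) = sup {F_{pq}(x) : q ∈ B}`. -/
noncomputable def probDistToSet {L : Type*} (ρ : L → L → ℝ → ℝ) (p : L) (B : Set L)
    (x : ℝ) : ℝ :=
  sSup ((fun q => ρ p q x) '' B)

/-- `Γ*_{AB}(x) = inf {F_{pB}(x) : p ∈ A}`. -/
noncomputable def gammaStar {L : Type*} (ρ : L → L → ℝ → ℝ) (A B : Set L) (x : ℝ) : ℝ :=
  sInf ((fun p => probDistToSet ρ p B x) '' A)

/-- `F*_{AB}`, the left-continuous regularization of `Γ*_{AB}`: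
`F*_{AB}(x) = sup_{x' < x} Γ*_{AB}(x')`. -/
noncomputable def fStar {L : Type*} (ρ : L → L → ℝ → ℝ) (A B : Set L) (x : ℝ) : ℝ :=
  sSup (gammaStar ρ A B '' Set.Iio x)

/-- The probabilistic Pompeiu-Hausdorff distance:
`H(A,B)(x) = F_{AB}(x) = min (F*_{AB}(x)) (F*_{BA}(x))`. -/
noncomputable def probHaus {L : Type*} (ρ : L → L → ℝ → ℝ) (A B : Set L) (x : ℝ) : ℝ :=
  min (fStar ρ A B x) (fStar ρ B A x)

/-- Convergence of a sequence of sets with respect to the probabilistic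
Pompeiu-Hausdorff metric `H`. -/
def HConv {L : Type*} (ρ : L → L → ℝ → ℝ) (An : ℕ → Set L) (A : Set L) : Prop :=
  ∀ t : ℝ, 0 < t → ∃ n₀ : ℕ, ∀ n ≥ n₀, 1 - t < probHaus ρ (An n) A t

/-- Cauchy sequence of sets with respect to the probabilistic Pompeiu-Hausdorff metric `H`. -/
def HCauchy {L : Type*} (ρ : L → L → ℝ → ℝ) (An : ℕ → Set L) : Prop :=
  ∀ t : ℝ, 0 < t → ∃ n₀ : ℕ, ∀ m ≥ n₀, ∀ n ≥ n₀, 1 - t < probHaus ρ (An m) (An n) t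

/-- A subset `A` of a PM space is compact in the strong topology (which is metrizable,
so compactness coincides with sequential compactness): every sequence in `A` has a
subsequence converging strongly to a point of `A`. -/
def SCompact {L : Type*} (ρ : L → L → ℝ → ℝ) (A : Set L) : Prop :=
  ∀ pn : ℕ → L, (∀ n, pn n ∈ A) →
    ∃ q ∈ A, ∃ φ : ℕ → ℕ, StrictMono φ ∧ SConvSeq ρ (fun k => pn (φ k)) q

/-- `D⁺`: distance distribution functions with `lim_{x → ∞} F x = 1`. -/
def IsDDFD (F : ℝ → ℝ) : Prop :=
  IsDDF F ∧ Filter.Tendsto F Filter.atTop (nhds 1)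

/-- A Šerstnev random normed space `(L, ν, τ)`. -/
structure IsRNSpace {L : Type*} [AddCommGroup L] [Module ℝ L]
    (ν : L → ℝ → ℝ) (τ : (ℝ → ℝ) → (ℝ → ℝ) → (ℝ → ℝ)) : Prop where
  triangleFn : IsTriangleFn τ
  maps_D : ∀ F G, IsDDFD F → IsDDFD G → IsDDFD (τ F G)
  nu_mem : ∀ p : L, IsDDFD (ν p)
  nu_eq_iff : ∀ p : L, ν p = eps0 ↔ p = 0
  nu_smul : ∀ a : ℝ, a ≠ 0 → ∀ p : L, ∀ x : ℝ, 0 ≤ x → ν (a • p) x = ν p (x / |a|)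
  nu_add : ∀ p q : L, τ (ν p) (ν q) ≤ ν (p + q)

/-- The inequality `τ(F,G)(x) ≥ sup_{t ∈ [0,1]} min (F (t x)) (G ((1-t) x))`
for all `x ≥ 0` and `F, G ∈ D⁺`. -/
def SerstnevIneq (τ : (ℝ → ℝ) → (ℝ → ℝ) → (ℝ → ℝ)) : Prop :=
  ∀ F G, IsDDFD F → IsDDFD G → ∀ x : ℝ, 0 ≤ x →
    sSup ((fun t => min (F (t * x)) (G ((1 - t) * x))) '' Set.Icc (0:ℝ) 1) ≤ τ F G x

section PfcAux

open Set Filter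
open scoped ENNReal
set_option linter.unusedSectionVars false

variable {L : Type*} [AddCommGroup L] [Module ℝ L]
variable {ν : L → ℝ → ℝ} {τ : (ℝ → ℝ) → (ℝ → ℝ) → (ℝ → ℝ)}

theorem PfcAux.nu_mono (hRN : IsRNSpace ν τ) (u : L) : Monotone (ν u) :=
  (hRN.nu_mem u).1.1

theorem PfcAux.nu_le_one (hRN : IsRNSpace ν τ) (u : L) (x : ℝ) : ν u x ≤ 1 :=
  (hRN.nu_mem u).1.2.2.1 x

theorem PfcAux.nu_nonpos (hRN : IsRNSpace ν τ) (u : L) {x : ℝ} (hx : x ≤ 0) : ν u x = 0 :=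
  (hRN.nu_mem u).1.2.2.2 x hx

theorem PfcAux.nu_nonneg (hRN : IsRNSpace ν τ) (u : L) (x : ℝ) : 0 ≤ ν u x := by
  rcases le_or_gt x 0 with h | h
  · rw [PfcAux.nu_nonpos hRN u h]
  · rw [← PfcAux.nu_nonpos hRN u le_rfl]
    exact PfcAux.nu_mono hRN u h.le

theorem PfcAux.nu_neg (hRN : IsRNSpace ν τ) (u : L) (x : ℝ) : ν (-u) x = ν u x := by
  rcases le_or_gt x 0 with h | h
  · rw [PfcAux.nu_nonpos hRN _ h, PfcAux.nu_nonpos hRN _ h]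
  · have := hRN.nu_smul (-1) (by norm_num) u x h.le
    simpa using this

theorem PfcAux.nu_zero (hRN : IsRNSpace ν τ) : ν (0 : L) = eps0 :=
  (hRN.nu_eq_iff 0).2 rfl

theorem PfcAux.nu_triangle (hRN : IsRNSpace ν τ) (hser : SerstnevIneq τ) (u v : L) {x y : ℝ}
    (hx : 0 ≤ x) (hy : 0 ≤ y) : min (ν u x) (ν v y) ≤ ν (u + v) (x + y) := by
  rcases eq_or_lt_of_le (add_nonneg hx hy) with h | h
  · have hx0 : x = 0 := by linarith
    have hy0 : y = 0 := by linarith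
    subst hx0; subst hy0
    rw [PfcAux.nu_nonpos hRN u le_rfl]
    simp [PfcAux.nu_nonneg hRN]
  · set θ := x / (x + y) with hθdef
    have hθ : θ ∈ Set.Icc (0:ℝ) 1 :=
      ⟨div_nonneg hx h.le, div_le_one_of_le₀ (by linarith) h.le⟩
    have key := hser (ν u) (ν v) (hRN.nu_mem u) (hRN.nu_mem v) (x + y) h.le
    have h1 : θ * (x + y) = x := div_mul_cancel₀ x h.ne'
    have h2 : (1 - θ) * (x + y) = y := by
      rw [sub_mul, one_mul, h1]; ring
    have hbdd : BddAbove ((fun t => min (ν u (t * (x + y))) (ν v ((1 - t) * (x + y)))) ''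
        Set.Icc (0:ℝ) 1) := by
      refine ⟨1, ?_⟩
      rintro z ⟨t, _, rfl⟩
      exact (min_le_left _ _).trans (PfcAux.nu_le_one hRN u _)
    calc min (ν u x) (ν v y)
        = min (ν u (θ * (x + y))) (ν v ((1 - θ) * (x + y))) := by rw [h1, h2]
      _ ≤ sSup ((fun t => min (ν u (t * (x + y))) (ν v ((1 - t) * (x + y)))) ''
            Set.Icc (0:ℝ) 1) := le_csSup hbdd ⟨θ, hθ, rfl⟩
      _ ≤ τ (ν u) (ν v) (x + y) := key
      _ ≤ ν (u + v) (x + y) := hRN.nu_add u v (x + y)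

theorem PfcAux.nu_comb (hRN : IsRNSpace ν τ) (hser : SerstnevIneq τ) (u v : L) {a x : ℝ}
    (ha0 : 0 ≤ a) (ha1 : a ≤ 1) (hx : 0 ≤ x) :
    min (ν u x) (ν v x) ≤ ν (a • u + (1 - a) • v) x := by
  rcases eq_or_lt_of_le ha0 with h0 | h0
  · have : a • u + (1 - a) • v = v := by rw [← h0]; simp
    rw [this]
    exact min_le_right _ _
  rcases eq_or_lt_of_le ha1 with h1 | h1
  · have : a • u + (1 - a) • v = u := by rw [h1]; simp
    rw [this]
    exact min_le_left _ _
  · have h1' : 0 < 1 - a := by linarith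
    have key := hser (ν (a • u)) (ν ((1 - a) • v)) (hRN.nu_mem _) (hRN.nu_mem _) x hx
    have e1 : ν (a • u) (a * x) = ν u x := by
      rw [hRN.nu_smul a h0.ne' u (a * x) (by positivity)]
      rw [abs_of_pos h0, mul_div_cancel_left₀ x h0.ne']
    have e2 : ν ((1 - a) • v) ((1 - a) * x) = ν v x := by
      rw [hRN.nu_smul (1 - a) h1'.ne' v ((1 - a) * x) (by positivity)]
      rw [abs_of_pos h1', mul_div_cancel_left₀ x h1'.ne']
    have hbdd : BddAbove ((fun t => min (ν (a • u) (t * x)) (ν ((1 - a) • v) ((1 - t) * x))) ''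
        Set.Icc (0:ℝ) 1) := by
      refine ⟨1, ?_⟩
      rintro z ⟨t, _, rfl⟩
      exact (min_le_left _ _).trans (PfcAux.nu_le_one hRN _ _)
    calc min (ν u x) (ν v x)
        = min (ν (a • u) (a * x)) (ν ((1 - a) • v) ((1 - a) * x)) := by rw [e1, e2]
      _ ≤ sSup ((fun t => min (ν (a • u) (t * x)) (ν ((1 - a) • v) ((1 - t) * x))) ''
            Set.Icc (0:ℝ) 1) := le_csSup hbdd ⟨a, ⟨ha0, ha1⟩, rfl⟩
      _ ≤ τ (ν (a • u)) (ν ((1 - a) • v)) x := key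
      _ ≤ ν (a • u + (1 - a) • v) x := hRN.nu_add _ _ x

/-- The candidate distance associated to the random norm. -/
noncomputable def pmD (ν : L → ℝ → ℝ) (p q : L) : ℝ :=
  sInf {t : ℝ | 0 < t ∧ 1 - t < ν (p - q) t}

theorem PfcAux.pmD_set_nonempty (hRN : IsRNSpace ν τ) (p q : L) :
    {t : ℝ | 0 < t ∧ 1 - t < ν (p - q) t}.Nonempty :=
  ⟨2, by norm_num, by have := PfcAux.nu_nonneg hRN (p - q) 2; linarith⟩

theorem PfcAux.pmD_bddBelow (p q : L) :
    BddBelow {t : ℝ | 0 < t ∧ 1 - t < ν (p - q) t} :=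
  ⟨0, fun _ ht => ht.1.le⟩

theorem PfcAux.pmD_nonneg (hRN : IsRNSpace ν τ) (p q : L) : 0 ≤ pmD ν p q :=
  le_csInf (PfcAux.pmD_set_nonempty hRN p q) fun _ ht => ht.1.le

theorem PfcAux.lt_of_pmD_lt (hRN : IsRNSpace ν τ) {p q : L} {t : ℝ} (h : pmD ν p q < t) :
    1 - t < ν (p - q) t := by
  obtain ⟨s, hs, hst⟩ := exists_lt_of_csInf_lt (PfcAux.pmD_set_nonempty hRN p q) h
  have hm : ν (p - q) s ≤ ν (p - q) t := PfcAux.nu_mono hRN _ hst.le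
  have := hs.2
  linarith

theorem PfcAux.pmD_le {p q : L} {t : ℝ} (ht : 0 < t) (h : 1 - t < ν (p - q) t) :
    pmD ν p q ≤ t :=
  csInf_le (PfcAux.pmD_bddBelow p q) ⟨ht, h⟩

theorem PfcAux.pmD_self (hRN : IsRNSpace ν τ) (p : L) : pmD ν p p = 0 := by
  refine le_antisymm ?_ (PfcAux.pmD_nonneg hRN p p)
  by_contra hlt
  push_neg at hlt
  have h2 : pmD ν p p ≤ pmD ν p p / 2 := by
    apply PfcAux.pmD_le (by linarith)
    rw [sub_self, PfcAux.nu_zero hRN]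
    simp only [eps0, if_neg (not_le.2 (by linarith : (0:ℝ) < pmD ν p p / 2))]
    linarith
  linarith

theorem PfcAux.pmD_comm (hRN : IsRNSpace ν τ) (p q : L) : pmD ν p q = pmD ν q p := by
  unfold pmD
  have : ∀ t : ℝ, ν (p - q) t = ν (q - p) t := fun t => by
    rw [← neg_sub q p, PfcAux.nu_neg hRN]
  simp only [this]

theorem PfcAux.pmD_triangle (hRN : IsRNSpace ν τ) (hser : SerstnevIneq τ) (p q r : L) :
    pmD ν p r ≤ pmD ν p q + pmD ν q r := by
  refine le_of_forall_pos_le_add fun ε hε => ?_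
  set s := pmD ν p q + ε / 2 with hsdef
  set t := pmD ν q r + ε / 2 with htdef
  have hspos : 0 < s := lt_of_le_of_lt (PfcAux.pmD_nonneg hRN p q) (by rw [hsdef]; linarith)
  have htpos : 0 < t := lt_of_le_of_lt (PfcAux.pmD_nonneg hRN q r) (by rw [htdef]; linarith)
  have hs : 1 - s < ν (p - q) s := PfcAux.lt_of_pmD_lt hRN (by rw [hsdef]; linarith)
  have ht : 1 - t < ν (q - r) t := PfcAux.lt_of_pmD_lt hRN (by rw [htdef]; linarith)
  have key : min (ν (p - q) s) (ν (q - r) t) ≤ ν (p - r) (s + t) := by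
    have := PfcAux.nu_triangle hRN hser (p - q) (q - r) hspos.le htpos.le
    rwa [sub_add_sub_cancel] at this
  have hfin : 1 - (s + t) < ν (p - r) (s + t) := by
    refine lt_of_lt_of_le (lt_min ?_ ?_) key <;> linarith
  have := PfcAux.pmD_le (by linarith : (0:ℝ) < s + t) hfin
  calc pmD ν p r ≤ s + t := this
    _ = pmD ν p q + pmD ν q r + ε := by rw [hsdef, htdef]; ring

theorem PfcAux.eq_of_pmD_eq_zero (hRN : IsRNSpace ν τ) {p q : L} (h : pmD ν p q = 0) :
    p = q := by
  have hν : ∀ x : ℝ, 0 < x → ν (p - q) x = 1 := by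
    intro x hx
    refine le_antisymm (PfcAux.nu_le_one hRN _ x) (le_of_forall_sub_le fun ε hε => ?_)
    set s := min ε x with hsdef
    have hs : 0 < s := lt_min hε hx
    have h1 : 1 - s < ν (p - q) s := PfcAux.lt_of_pmD_lt hRN (h ▸ hs)
    have h2 : ν (p - q) s ≤ ν (p - q) x := PfcAux.nu_mono hRN _ (min_le_right ε x)
    have h3 : 1 - ε ≤ 1 - s := by
      have := min_le_left ε x
      linarith
    linarith
  have : ν (p - q) = eps0 := by
    funext x
    rcases le_or_gt x 0 with hx | hx
    · rw [PfcAux.nu_nonpos hRN _ hx, eps0, if_pos hx]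
    · rw [hν x hx, eps0, if_neg (not_le.2 hx)]
  have := (hRN.nu_eq_iff (p - q)).1 this
  exact sub_eq_zero.1 this

/-- The metric space structure on `L` induced by the random norm. -/
noncomputable def pmMS (hRN : IsRNSpace ν τ) (hser : SerstnevIneq τ) : MetricSpace L where
  dist := pmD ν
  dist_self := PfcAux.pmD_self hRN
  dist_comm := PfcAux.pmD_comm hRN
  dist_triangle := PfcAux.pmD_triangle hRN hser
  eq_of_dist_eq_zero := PfcAux.eq_of_pmD_eq_zero hRN

end PfcAux

section PfcAux2

open Set Filter
open scoped ENNReal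
set_option linter.unusedSectionVars false

variable {L : Type*} [AddCommGroup L] [Module ℝ L] [MetricSpace L]
variable {ν : L → ℝ → ℝ} {τ : (ℝ → ℝ) → (ℝ → ℝ) → (ℝ → ℝ)}

theorem PfcAux.nu_of_dist_lt (hRN : IsRNSpace ν τ)
    (hd : ∀ p q : L, dist p q = pmD ν p q) {p q : L} {t : ℝ} (h : dist p q < t) :
    1 - t < ν (p - q) t :=
  PfcAux.lt_of_pmD_lt hRN (by rwa [hd p q] at h)

theorem PfcAux.dist_le_of (hd : ∀ p q : L, dist p q = pmD ν p q) {p q : L} {t : ℝ}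
    (ht : 0 < t) (h : 1 - t < ν (p - q) t) : dist p q ≤ t := by
  rw [hd p q]; exact PfcAux.pmD_le ht h

theorem PfcAux.sconv_iff (hRN : IsRNSpace ν τ) (hd : ∀ p q : L, dist p q = pmD ν p q)
    (pn : ℕ → L) (p : L) :
    SConvSeq (fun a b => ν (a - b)) pn p ↔ Filter.Tendsto pn Filter.atTop (nhds p) := by
  rw [Metric.tendsto_atTop]
  constructor
  · intro h ε hε
    obtain ⟨N, hN⟩ := h (ε / 2) (half_pos hε)
    exact ⟨N, fun n hn =>
      lt_of_le_of_lt (PfcAux.dist_le_of hd (half_pos hε) (hN n hn)) (half_lt_self hε)⟩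
  · intro h t ht
    obtain ⟨N, hN⟩ := h t ht
    exact ⟨N, fun n hn => PfcAux.nu_of_dist_lt hRN hd (hN n hn)⟩

theorem PfcAux.completeSpace_of (hRN : IsRNSpace ν τ) (hd : ∀ p q : L, dist p q = pmD ν p q)
    (hc : SComplete (fun p q : L => ν (p - q))) : CompleteSpace L := by
  apply Metric.complete_of_cauchySeq_tendsto
  intro u hu
  have hs : SCauchySeq (fun p q : L => ν (p - q)) u := by
    intro t ht
    obtain ⟨N, hN⟩ := Metric.cauchySeq_iff.1 hu t ht
    exact ⟨N, fun m hm n hn => PfcAux.nu_of_dist_lt hRN hd (hN m hm n hn)⟩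
  obtain ⟨p, hp⟩ := hc u hs
  exact ⟨p, (PfcAux.sconv_iff hRN hd u p).1 hp⟩

theorem PfcAux.sclosed_iff (hRN : IsRNSpace ν τ) (hd : ∀ p q : L, dist p q = pmD ν p q)
    (A : Set L) : SClosed (fun a b => ν (a - b)) A ↔ IsClosed A := by
  rw [← isSeqClosed_iff_isClosed]
  constructor
  · intro h x p hx hp
    exact h ⟨x, hx, (PfcAux.sconv_iff hRN hd x p).2 hp⟩
  · intro h q hq
    obtain ⟨x, hx, hconv⟩ := hq
    exact h hx ((PfcAux.sconv_iff hRN hd x q).1 hconv)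

theorem PfcAux.scompact_iff (hRN : IsRNSpace ν τ) (hd : ∀ p q : L, dist p q = pmD ν p q)
    (A : Set L) : SCompact (fun a b => ν (a - b)) A ↔ IsCompact A := by
  constructor
  · intro h
    apply IsSeqCompact.isCompact
    intro x hx
    obtain ⟨a, ha, φ, hφ, hconv⟩ := h x hx
    exact ⟨a, ha, φ, hφ, (PfcAux.sconv_iff hRN hd (fun k => x (φ k)) a).1 hconv⟩
  · intro h x hx
    obtain ⟨a, ha, φ, hφ, hconv⟩ := h.isSeqCompact hx
    exact ⟨a, ha, φ, hφ, (PfcAux.sconv_iff hRN hd (fun k => x (φ k)) a).2 hconv⟩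

theorem PfcAux.probDist_le_one (hRN : IsRNSpace ν τ) (p : L) (B : Set L) (x : ℝ) :
    probDistToSet (fun a b => ν (a - b)) p B x ≤ 1 :=
  Real.sSup_le (by rintro y ⟨q, _, rfl⟩; exact PfcAux.nu_le_one hRN _ x) zero_le_one

theorem PfcAux.probDist_nonneg (hRN : IsRNSpace ν τ) (p : L) (B : Set L) (x : ℝ) :
    0 ≤ probDistToSet (fun a b => ν (a - b)) p B x :=
  Real.sSup_nonneg (by rintro y ⟨q, _, rfl⟩; exact PfcAux.nu_nonneg hRN _ x)

theorem PfcAux.le_probDist (hRN : IsRNSpace ν τ) {p q : L} {B : Set L} {x : ℝ} (hq : q ∈ B) :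
    ν (p - q) x ≤ probDistToSet (fun a b => ν (a - b)) p B x :=
  le_csSup ⟨1, by rintro y ⟨r, _, rfl⟩; exact PfcAux.nu_le_one hRN _ x⟩ ⟨q, hq, rfl⟩

theorem PfcAux.gamma_le_one (hRN : IsRNSpace ν τ) {A : Set L} (B : Set L) (x : ℝ)
    (hA : A.Nonempty) : gammaStar (fun a b => ν (a - b)) A B x ≤ 1 := by
  obtain ⟨p, hp⟩ := hA
  exact csInf_le_of_le ⟨0, by rintro y ⟨r, _, rfl⟩; exact PfcAux.probDist_nonneg hRN _ _ _⟩
    ⟨p, hp, rfl⟩ (PfcAux.probDist_le_one hRN p B x)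

theorem PfcAux.exists_close_of_fStar (hRN : IsRNSpace ν τ) {A B : Set L} (hB : B.Nonempty)
    {t : ℝ} (h : 1 - t < fStar (fun a b => ν (a - b)) A B t) :
    ∀ p ∈ A, ∃ q ∈ B, 1 - t < ν (p - q) t := by
  obtain ⟨y, ⟨x, hx, rfl⟩, hy⟩ := exists_lt_of_lt_csSup
    ((Set.nonempty_Iio (a := t)).image _) h
  intro p hp
  have h1 : 1 - t < probDistToSet (fun a b => ν (a - b)) p B x :=
    lt_of_lt_of_le hy (csInf_le
      ⟨0, by rintro z ⟨r, _, rfl⟩; exact PfcAux.probDist_nonneg hRN _ _ _⟩ ⟨p, hp, rfl⟩)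
  obtain ⟨y', ⟨q, hq, rfl⟩, hy'⟩ := exists_lt_of_lt_csSup (hB.image _) h1
  exact ⟨q, hq, lt_of_lt_of_le hy' (PfcAux.nu_mono hRN _ (le_of_lt hx))⟩

theorem PfcAux.probHaus_lt_of (hRN : IsRNSpace ν τ) {A B : Set L}
    (hA : A.Nonempty) (hB : B.Nonempty) {t x c : ℝ}
    (hx : x < t) (hc : 1 - t < c)
    (h1 : ∀ p ∈ A, ∃ q ∈ B, c ≤ ν (p - q) x)
    (h2 : ∀ q ∈ B, ∃ p ∈ A, c ≤ ν (q - p) x) :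
    1 - t < probHaus (fun a b => ν (a - b)) A B t := by
  have key : ∀ C D : Set L, C.Nonempty → D.Nonempty →
      (∀ p ∈ C, ∃ q ∈ D, c ≤ ν (p - q) x) →
      1 - t < fStar (fun a b => ν (a - b)) C D t := by
    intro C D hC hD h
    have hg : c ≤ gammaStar (fun a b => ν (a - b)) C D x := by
      refine le_csInf (hC.image _) ?_
      rintro y ⟨p, hp, rfl⟩
      obtain ⟨q, hq, hcq⟩ := h p hp
      exact hcq.trans (PfcAux.le_probDist hRN hq)
    have hle : gammaStar (fun a b => ν (a - b)) C D x ≤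
        fStar (fun a b => ν (a - b)) C D t :=
      le_csSup ⟨1, by rintro y ⟨x', _, rfl⟩; exact PfcAux.gamma_le_one hRN D x' hC⟩
        ⟨x, hx, rfl⟩
    linarith
  exact lt_min (key A B hA hB h1) (key B A hB hA h2)

theorem PfcAux.hausdorffEdist_le (hRN : IsRNSpace ν τ)
    (hd : ∀ p q : L, dist p q = pmD ν p q) {A B : Set L}
    (hA : A.Nonempty) (hB : B.Nonempty) {t : ℝ} (ht : 0 < t)
    (h : 1 - t < probHaus (fun a b => ν (a - b)) A B t) :
    EMetric.hausdorffEdist A B ≤ ENNReal.ofReal t := by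
  rw [probHaus, lt_min_iff] at h
  apply EMetric.hausdorffEdist_le_of_mem_edist
  · intro p hp
    obtain ⟨q, hq, hpq⟩ := PfcAux.exists_close_of_fStar hRN hB h.1 p hp
    refine ⟨q, hq, ?_⟩
    rw [edist_dist]
    exact ENNReal.ofReal_le_ofReal (PfcAux.dist_le_of hd ht hpq)
  · intro q hq
    obtain ⟨p, hp, hqp⟩ := PfcAux.exists_close_of_fStar hRN hA h.2 q hq
    refine ⟨p, hp, ?_⟩
    rw [edist_dist]
    exact ENNReal.ofReal_le_ofReal (PfcAux.dist_le_of hd ht hqp)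

theorem PfcAux.probHaus_of_hausdorffEdist (hRN : IsRNSpace ν τ)
    (hd : ∀ p q : L, dist p q = pmD ν p q) {A B : Set L}
    (hA : A.Nonempty) (hB : B.Nonempty) {t : ℝ} (ht : 0 < t)
    (h : EMetric.hausdorffEdist A B < ENNReal.ofReal (t / 3)) :
    1 - t < probHaus (fun a b => ν (a - b)) A B t := by
  apply PfcAux.probHaus_lt_of hRN hA hB (x := t / 2) (c := 1 - t / 3)
    (by linarith) (by linarith)
  · intro p hp
    obtain ⟨q, hq, hpq⟩ := EMetric.exists_edist_lt_of_hausdorffEdist_lt hp h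
    rw [edist_lt_ofReal] at hpq
    have h2 : 1 - t / 3 < ν (p - q) (t / 3) := PfcAux.nu_of_dist_lt hRN hd hpq
    exact ⟨q, hq, h2.le.trans (PfcAux.nu_mono hRN _ (by linarith))⟩
  · intro q hq
    obtain ⟨p, hp, hqp⟩ := EMetric.exists_edist_lt_of_hausdorffEdist_lt hq
      (Metric.hausdorffEDist_comm.trans_lt h)
    rw [edist_lt_ofReal] at hqp
    have h2 : 1 - t / 3 < ν (q - p) (t / 3) := PfcAux.nu_of_dist_lt hRN hd hqp
    exact ⟨p, hp, h2.le.trans (PfcAux.nu_mono hRN _ (by linarith))⟩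

theorem PfcAux.convex_of_HConv (hRN : IsRNSpace ν τ) (hser : SerstnevIneq τ)
    (hd : ∀ p q : L, dist p q = pmD ν p q) {An : ℕ → Set L} {A : Set L}
    (hAnne : ∀ n, (An n).Nonempty) (hAnc : ∀ n, Convex ℝ (An n))
    (hA : A.Nonempty) (hAcl : IsClosed A)
    (h : HConv (fun a b => ν (a - b)) An A) : Convex ℝ A := by
  intro p hp q hq a b ha hb hab
  have hb' : b = 1 - a := by linarith
  subst hb'
  have ha1 : a ≤ 1 := by linarith
  suffices hmem : a • p + (1 - a) • q ∈ closure A by rwa [hAcl.closure_eq] at hmem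
  rw [Metric.mem_closure_iff]
  intro ε hε
  have ht : 0 < ε / 4 := by linarith
  obtain ⟨n₀, hn₀⟩ := h (ε / 4) ht
  have hH := hn₀ n₀ le_rfl
  rw [probHaus, lt_min_iff] at hH
  obtain ⟨p', hp', hpp'⟩ := PfcAux.exists_close_of_fStar hRN (hAnne n₀) hH.2 p hp
  obtain ⟨q', hq', hqq'⟩ := PfcAux.exists_close_of_fStar hRN (hAnne n₀) hH.2 q hq
  have hr' : a • p' + (1 - a) • q' ∈ An n₀ := hAnc n₀ hp' hq' ha (by linarith) (by ring)
  have hcomb : 1 - ε / 4 < ν ((a • p + (1 - a) • q) - (a • p' + (1 - a) • q')) (ε / 4) := by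
    have h1 : (a • p + (1 - a) • q) - (a • p' + (1 - a) • q')
        = a • (p - p') + (1 - a) • (q - q') := by
      simp only [smul_sub]
      abel
    rw [h1]
    exact lt_of_lt_of_le (lt_min hpp' hqq')
      (PfcAux.nu_comb hRN hser _ _ ha ha1 ht.le)
  obtain ⟨s, hs, hr's⟩ := PfcAux.exists_close_of_fStar hRN hA hH.1 _ hr'
  refine ⟨s, hs, ?_⟩
  have d1 : dist (a • p + (1 - a) • q) (a • p' + (1 - a) • q') ≤ ε / 4 :=
    PfcAux.dist_le_of hd ht hcomb
  have d2 : dist (a • p' + (1 - a) • q') s ≤ ε / 4 := PfcAux.dist_le_of hd ht hr's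
  calc dist (a • p + (1 - a) • q) s
      ≤ dist (a • p + (1 - a) • q) (a • p' + (1 - a) • q')
        + dist (a • p' + (1 - a) • q') s := dist_triangle _ _ _
    _ ≤ ε / 4 + ε / 4 := add_le_add d1 d2
    _ < ε := by linarith

theorem PfcAux.exists_ofReal_lt {ε : ℝ≥0∞} (hε : 0 < ε) :
    ∃ t : ℝ, 0 < t ∧ ENNReal.ofReal t < ε := by
  rcases eq_or_ne ε ⊤ with rfl | hne
  · exact ⟨1, one_pos, ENNReal.ofReal_lt_top⟩
  · have h0 : 0 < ε.toReal := ENNReal.toReal_pos hε.ne' hne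
    refine ⟨ε.toReal / 2, by linarith, ?_⟩
    calc ENNReal.ofReal (ε.toReal / 2) < ENNReal.ofReal ε.toReal :=
          (ENNReal.ofReal_lt_ofReal_iff h0).2 (by linarith)
      _ = ε := ENNReal.ofReal_toReal hne

end PfcAux2


/-- In a Šerstnev random normed space with sup-continuous triangle function satisfying
`τ(F,G)(x) ≥ sup_{t ∈ [0,1]} min (F (t x)) (G ((1-t) x))`: the family `P_{fc}(L)` of
nonempty closed convex sets is closed in `P_f(L)` with respect to the probabilistic
Pompeiu-Hausdorff metric `H`; consequently, if `L` is complete, `P_{fc}(L)` and the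
family `P_{kc}(L)` of nonempty compact convex sets are complete with respect to `H`. -/
theorem Pfc_closed_and_complete {L : Type*} [AddCommGroup L] [Module ℝ L]
    (ν : L → ℝ → ℝ) (τ : (ℝ → ℝ) → (ℝ → ℝ) → (ℝ → ℝ)) (hRN : IsRNSpace ν τ)
    (hsup : SupContinuous τ) (hser : SerstnevIneq τ) :
    (∀ (An : ℕ → Set L) (A : Set L),
      (∀ n, (An n).Nonempty ∧ SClosed (fun p q => ν (p - q)) (An n) ∧ Convex ℝ (An n)) →
      A.Nonempty → SClosed (fun p q => ν (p - q)) A →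
      HConv (fun p q => ν (p - q)) An A → Convex ℝ A) ∧
    (SComplete (fun p q : L => ν (p - q)) →
      (∀ An : ℕ → Set L,
        (∀ n, (An n).Nonempty ∧ SClosed (fun p q => ν (p - q)) (An n) ∧ Convex ℝ (An n)) →
        HCauchy (fun p q => ν (p - q)) An →
        ∃ A : Set L, A.Nonempty ∧ SClosed (fun p q => ν (p - q)) A ∧ Convex ℝ A ∧
          HConv (fun p q => ν (p - q)) An A) ∧
      (∀ An : ℕ → Set L,
        (∀ n, (An n).Nonempty ∧ SCompact (fun p q => ν (p - q)) (An n) ∧ Convex ℝ (An n)) →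
        HCauchy (fun p q => ν (p - q)) An →
        ∃ A : Set L, A.Nonempty ∧ SCompact (fun p q => ν (p - q)) A ∧ Convex ℝ A ∧
          HConv (fun p q => ν (p - q)) An A)) := by
  letI : MetricSpace L := pmMS hRN hser
  have hd : ∀ p q : L, dist p q = pmD ν p q := fun _ _ => rfl
  constructor
  · intro An A hAn hA hAcl hconv
    exact PfcAux.convex_of_HConv hRN hser hd (fun n => (hAn n).1) (fun n => (hAn n).2.2)
      hA ((PfcAux.sclosed_iff hRN hd A).1 hAcl) hconv
  · intro hcomp
    haveI : CompleteSpace L := PfcAux.completeSpace_of hRN hd hcomp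
    constructor
    · -- closed convex case
      intro An hAn hH
      set Cn : ℕ → TopologicalSpace.Closeds L :=
        fun n => ⟨An n, (PfcAux.sclosed_iff hRN hd _).1 (hAn n).2.1⟩ with hCn
      have hcauchy : CauchySeq Cn := by
        rw [EMetric.cauchySeq_iff]
        intro ε hε
        obtain ⟨t, ht, htε⟩ := PfcAux.exists_ofReal_lt hε
        obtain ⟨N, hN⟩ := hH t ht
        refine ⟨N, fun m hm n hn => ?_⟩
        calc edist (Cn m) (Cn n) = EMetric.hausdorffEdist (An m) (An n) :=
              EMetric.Closeds.edist_eq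
          _ ≤ ENNReal.ofReal t :=
              PfcAux.hausdorffEdist_le hRN hd (hAn m).1 (hAn n).1 ht (hN m hm n hn)
          _ < ε := htε
      obtain ⟨C, hC⟩ := cauchySeq_tendsto_of_complete hcauchy
      have hconv : ∀ δ : ℝ, 0 < δ →
          ∃ N, ∀ n ≥ N, EMetric.hausdorffEdist (An n) (C : Set L) < ENNReal.ofReal δ := by
        intro δ hδ
        obtain ⟨N, hN⟩ := (EMetric.tendsto_atTop).1 hC (ENNReal.ofReal δ)
          (ENNReal.ofReal_pos.2 hδ)
        refine ⟨N, fun n hn => ?_⟩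
        have := hN n hn
        rwa [EMetric.Closeds.edist_eq] at this
      have hCne : (C : Set L).Nonempty := by
        obtain ⟨N, hN⟩ := hconv 1 one_pos
        exact EMetric.nonempty_of_hausdorffEdist_ne_top (hAn N).1 (ne_top_of_lt (hN N le_rfl))
      have hHConv : HConv (fun p q : L => ν (p - q)) An (C : Set L) := by
        intro t ht
        obtain ⟨N, hN⟩ := hconv (t / 3) (by linarith)
        exact ⟨N, fun n hn =>
          PfcAux.probHaus_of_hausdorffEdist hRN hd (hAn n).1 hCne ht (hN n hn)⟩
      exact ⟨C, hCne, (PfcAux.sclosed_iff hRN hd _).2 C.isClosed',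
        PfcAux.convex_of_HConv hRN hser hd (fun n => (hAn n).1) (fun n => (hAn n).2.2)
          hCne C.isClosed' hHConv, hHConv⟩
    · -- compact convex case
      intro An hAn hH
      set Cn : ℕ → TopologicalSpace.NonemptyCompacts L :=
        fun n => ⟨⟨An n, (PfcAux.scompact_iff hRN hd _).1 (hAn n).2.1⟩, (hAn n).1⟩ with hCn
      have hcauchy : CauchySeq Cn := by
        rw [EMetric.cauchySeq_iff]
        intro ε hε
        obtain ⟨t, ht, htε⟩ := PfcAux.exists_ofReal_lt hε
        obtain ⟨N, hN⟩ := hH t ht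
        refine ⟨N, fun m hm n hn => ?_⟩
        calc edist (Cn m) (Cn n) = EMetric.hausdorffEdist (An m) (An n) := rfl
          _ ≤ ENNReal.ofReal t :=
              PfcAux.hausdorffEdist_le hRN hd (hAn m).1 (hAn n).1 ht (hN m hm n hn)
          _ < ε := htε
      obtain ⟨C, hC⟩ := cauchySeq_tendsto_of_complete hcauchy
      have hconv : ∀ δ : ℝ, 0 < δ →
          ∃ N, ∀ n ≥ N, EMetric.hausdorffEdist (An n) (C : Set L) < ENNReal.ofReal δ := by
        intro δ hδ
        obtain ⟨N, hN⟩ := (EMetric.tendsto_atTop).1 hC (ENNReal.ofReal δ)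
          (ENNReal.ofReal_pos.2 hδ)
        refine ⟨N, fun n hn => ?_⟩
        exact hN n hn
      have hHConv : HConv (fun p q : L => ν (p - q)) An (C : Set L) := by
        intro t ht
        obtain ⟨N, hN⟩ := hconv (t / 3) (by linarith)
        exact ⟨N, fun n hn =>
          PfcAux.probHaus_of_hausdorffEdist hRN hd (hAn n).1 C.nonempty ht (hN n hn)⟩
      exact ⟨C, C.nonempty, (PfcAux.scompact_iff hRN hd _).2 C.isCompact,
        PfcAux.convex_of_HConv hRN hser hd (fun n => (hAn n).1) (fun n => (hAn n).2.2)
          C.nonempty C.isCompact.isClosed hHConv, hHConv⟩
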